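/- arXiv:1608.07560 — 2 statements merged into one kernel-verified Lean document; each statement's English description precedes it below -/
import Mathlib

section
/- Let f be a holomorphic function on an open set containing the segment between distinct complex numbers a and b. Then there exists a point α on the segment joining a and b such that |b-a|² · Re(f'(α)) = Re( conj(b-a) · (f(b) - f(a)) ). -/
/-- Real-part complex Mean Value Theorem: if `f` is holomorphic on an open set
containing the segment between distinct `a b : ℂ`, then there is `α` on the
segment with `|b-a|² · Re(f'(α)) = Re( conj(b-a) · (f b - f a) )`. -/
theorem complex_mvt_re (f : ℂ → ℂ) (a b : ℂ) (hab : a ≠ b)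
    (s : Set ℂ) (hs : IsOpen s) (hseg : segment ℝ a b ⊆ s)
    (hf : DifferentiableOn ℂ f s) :
    ∃ α ∈ segment ℝ a b,
      (‖b - a‖)^2 * (deriv f α).re
        = ((starRingEnd ℂ) (b - a) * (f b - f a)).re := by
  set L : ℝ → ℂ := fun t => a + t • (b - a) with hL
  have hmem : ∀ t ∈ Set.Icc (0:ℝ) 1, L t ∈ segment ℝ a b := by
    intro t ht
    rw [segment_eq_image']
    exact ⟨t, ht, rfl⟩
  set g : ℝ → ℝ := fun t => ((starRingEnd ℂ) (b - a) * f (L t)).re with hg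
  have hLd : ∀ t : ℝ, HasDerivAt L (b - a) t := by
    intro t
    have : HasDerivAt (fun t : ℝ => t • (b - a)) (b - a) t := by
      simpa using (hasDerivAt_id t).smul_const (b - a)
    simpa [hL] using this.const_add a
  have hgd : ∀ t ∈ Set.Icc (0:ℝ) 1,
      HasDerivAt g (((starRingEnd ℂ) (b - a) * ((b - a) * deriv f (L t))).re) t := by
    intro t ht
    have hzs : L t ∈ s := hseg (hmem t ht)
    have hfz : HasDerivAt f (deriv f (L t)) (L t) :=
      ((hf.differentiableAt (hs.mem_nhds hzs)).hasDerivAt)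
    have h1 : HasDerivAt (fun t => f (L t)) ((b - a) * deriv f (L t)) t := by
      have := (hfz.hasFDerivAt.restrictScalars ℝ).comp_hasDerivAt t (hLd t)
      simp [mul_comm] at this
      exact this
    have h2 : HasDerivAt (fun t => (starRingEnd ℂ) (b - a) * f (L t))
        ((starRingEnd ℂ) (b - a) * ((b - a) * deriv f (L t))) t := h1.const_mul _
    exact (Complex.reCLM.hasFDerivAt.comp_hasDerivAt t h2)
  have hcont : ContinuousOn g (Set.Icc 0 1) := fun t ht =>
    (hgd t ht).continuousAt.continuousWithinAt
  have hdiff : DifferentiableOn ℝ g (Set.Ioo 0 1) := fun t ht =>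
    ((hgd t (Set.mem_Icc_of_Ioo ht)).differentiableAt).differentiableWithinAt
  obtain ⟨c, hc, hceq⟩ := exists_deriv_eq_slope g (by norm_num : (0:ℝ) < 1) hcont hdiff
  have hc' : c ∈ Set.Icc (0:ℝ) 1 := Set.mem_Icc_of_Ioo hc
  refine ⟨L c, hmem c hc', ?_⟩
  have hd : deriv g c = ((starRingEnd ℂ) (b - a) * ((b - a) * deriv f (L c))).re :=
    (hgd c hc').deriv
  have hL1 : L 1 = b := by simp [hL]
  have hL0 : L 0 = a := by simp [hL]
  rw [hd] at hceq
  simp only [hd, hg, hL1, hL0] at hceq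
  have hkey : (starRingEnd ℂ) (b - a) * ((b - a) * deriv f (L c))
      = ((‖b - a‖)^2 : ℝ) * deriv f (L c) := by
    rw [← mul_assoc, Complex.conj_mul']
    push_cast
    ring
  rw [hkey] at hceq
  rw [sub_zero, div_one] at hceq
  rw [show ((starRingEnd ℂ) (b - a) * (f b - f a)).re
      = ((starRingEnd ℂ) (b - a) * f b).re - ((starRingEnd ℂ) (b - a) * f a).re by
    simp [mul_sub]]
  rw [← hceq, Complex.re_ofReal_mul]
end

section
/- Let f be a holomorphic function on an open set containing the segment between distinct complex numbers a and b. Then there exists a point β on the segment joining a and b such that |b-a|² · Im(f'(β)) = Im( conj(b-a) · (f(b) - f(a)) ). -/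
/-- Imaginary-part complex Mean Value Theorem: if `f` is holomorphic on an open set
containing the segment between distinct `a b : ℂ`, then there is `β` on the
segment with `|b-a|² · Im(f'(α)) = Im( conj(b-a) · (f b - f a) )`. -/
theorem complex_mvt_im (f : ℂ → ℂ) (a b : ℂ) (hab : a ≠ b)
    (s : Set ℂ) (hs : IsOpen s) (hseg : segment ℝ a b ⊆ s)
    (hf : DifferentiableOn ℂ f s) :
    ∃ β ∈ segment ℝ a b,
      (‖b - a‖)^2 * (deriv f β).im
        = ((starRingEnd ℂ) (b - a) * (f b - f a)).im := by
  set c : ℂ := b - a with hc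
  set γ : ℝ → ℂ := fun t => a + t • c with hγ
  have hmemseg : ∀ t ∈ Set.Icc (0:ℝ) 1, γ t ∈ segment ℝ a b := by
    intro t ht
    rw [segment_eq_image']
    exact ⟨t, ht, rfl⟩
  have hder : ∀ t ∈ Set.Icc (0:ℝ) 1,
      HasDerivAt (fun t => ((starRingEnd ℂ) c * f (γ t)).im)
        ((starRingEnd ℂ) c * (c • deriv f (γ t))).im t := by
    intro t ht
    have hγd : HasDerivAt γ c t := by
      simpa [hγ] using ((hasDerivAt_id t).smul_const c).const_add a
    have hfd : HasDerivAt f (deriv f (γ t)) (γ t) :=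
      (hf.differentiableAt (hs.mem_nhds (hseg (hmemseg t ht)))).hasDerivAt
    have := (hfd.scomp t hγd).const_mul ((starRingEnd ℂ) c)
    exact Complex.imCLM.hasFDerivAt.comp_hasDerivAt t this
  obtain ⟨t₀, ht₀, heq⟩ := exists_hasDerivAt_eq_slope
    (fun t => ((starRingEnd ℂ) c * f (γ t)).im)
    (fun t => ((starRingEnd ℂ) c * (c • deriv f (γ t))).im)
    (by norm_num : (0:ℝ) < 1)
    (fun t ht => (hder t ht).continuousAt.continuousWithinAt)
    (fun t ht => hder t (Set.mem_Icc_of_Ioo ht))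
  refine ⟨γ t₀, hmemseg t₀ (Set.mem_Icc_of_Ioo ht₀), ?_⟩
  have h0 : γ 0 = a := by simp [hγ]
  have h1 : γ 1 = b := by simp [hγ, hc]
  have hcc : (starRingEnd ℂ) c * c = ((‖c‖)^2 : ℝ) := by
    rw [mul_comm]
    push_cast
    rw [Complex.mul_conj']
  calc (‖b - a‖)^2 * (deriv f (γ t₀)).im
      = ((starRingEnd ℂ) c * (c • deriv f (γ t₀))).im := by
        rw [smul_eq_mul, ← mul_assoc, hcc]
        simp [Complex.mul_im, ← Complex.ofReal_pow, hc]
    _ = ((starRingEnd ℂ) c * (f b - f a)).im := by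
        rw [heq, h0, h1]
        simp [mul_sub]
end
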